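/- Consider a market with finite player set N and item set M, where each valuation ṽ_i : 2^M → ℝ≥0 is ε-close to an additive valuation a_i (a_i(S) = Σ_{j∈S} a_{ij} with a_{ij} ≥ 0). Let σ : M → N assign each item j to a player maximizing ṽ_i({j}), i.e., ṽ_{σ(j)}({j}) ≥ ṽ_i({j}) for all i, and let R_i := σ^{-1}(i). Then Σ_i ṽ_i(R_i) ≥ OPT/(1+ε)^2, where OPT is the maximum of Σ_i ṽ_i(T_i) over all allocations (T_i). -/

import Mathlib

/-- Proposition: welfare maximization for valuations close to
additive.  Each `ṽ_i` is `ε`-close to an additive valuation `a_i`.  If `σ`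
assigns each item `j` to a player maximizing `ṽ_i({j})` and `R_i = σ⁻¹(i)`,
then `Σ_i ṽ_i(R_i) ≥ OPT/(1+ε)²`, i.e. the welfare of the allocation `(R_i)`
is within a factor `(1+ε)²` of the welfare of every allocation. -/
theorem close_to_additive_assignment
    {N M : Type*} [Fintype N] [Fintype M] [DecidableEq N] [DecidableEq M]
    (ε : ℝ) (hε : 0 ≤ ε)
    (vt : N → Finset M → ℝ)
    (hvt : ∀ (i : N) (S : Finset M), 0 ≤ vt i S)
    (a : N → M → ℝ) (ha : ∀ i j, 0 ≤ a i j)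
    (hclose : ∀ (i : N) (S : Finset M),
      (∑ j ∈ S, a i j) ≤ vt i S ∧ vt i S ≤ (1 + ε) * ∑ j ∈ S, a i j)
    (σ : M → N)
    (hσ : ∀ (j : M) (i : N), vt i {j} ≤ vt (σ j) {j})
    (R : N → Finset M)
    (hR : ∀ i : N, R i = Finset.univ.filter (fun j : M => σ j = i)) :
    ∀ T : N → Finset M, (∀ i i' : N, i ≠ i' → Disjoint (T i) (T i')) →
      ∑ i : N, vt i (R i) ≥ (∑ i : N, vt i (T i)) / (1 + ε) ^ 2 := by
  intro T hT
  have hpos : (0:ℝ) < (1 + ε) ^ 2 := by positivity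
  rw [ge_iff_le, div_le_iff₀ hpos]
  have key : ∀ (i : N) (j : M), a i j ≤ (1 + ε) * a (σ j) j := by
    intro i j
    have h1 : a i j ≤ vt i {j} := by
      have := (hclose i {j}).1; simpa using this
    have h2 : vt (σ j) {j} ≤ (1 + ε) * a (σ j) j := by
      have := (hclose (σ j) {j}).2; simpa using this
    exact h1.trans ((hσ j i).trans h2)
  have hRsum : (∑ j : M, a (σ j) j) ≤ ∑ i : N, vt i (R i) := by
    have := Finset.sum_fiberwise (Finset.univ : Finset M) σ (fun j => a (σ j) j)
    rw [← this]
    apply Finset.sum_le_sum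
    intro i _
    have hS : ∑ j ∈ Finset.univ.filter (fun j => σ j = i), a (σ j) j
        = ∑ j ∈ R i, a i j := by
      rw [hR i]
      apply Finset.sum_congr rfl
      intro j hj
      rw [(Finset.mem_filter.mp hj).2]
    rw [hS]
    exact (hclose i (R i)).1
  have hTi : ∀ i : N, vt i (T i) ≤ (1 + ε) ^ 2 * ∑ j ∈ T i, a (σ j) j := by
    intro i
    have h1 : vt i (T i) ≤ (1 + ε) * ∑ j ∈ T i, a i j := (hclose i (T i)).2
    have h2 : (∑ j ∈ T i, a i j) ≤ (1 + ε) * ∑ j ∈ T i, a (σ j) j := by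
      rw [Finset.mul_sum]
      exact Finset.sum_le_sum fun j _ => key i j
    calc vt i (T i) ≤ (1 + ε) * ∑ j ∈ T i, a i j := h1
      _ ≤ (1 + ε) * ((1 + ε) * ∑ j ∈ T i, a (σ j) j) :=
          mul_le_mul_of_nonneg_left h2 (by linarith)
      _ = (1 + ε) ^ 2 * ∑ j ∈ T i, a (σ j) j := by ring
  calc ∑ i : N, vt i (T i)
      ≤ ∑ i : N, (1 + ε) ^ 2 * ∑ j ∈ T i, a (σ j) j :=
        Finset.sum_le_sum fun i _ => hTi i
    _ = (1 + ε) ^ 2 * ∑ i : N, ∑ j ∈ T i, a (σ j) j := by rw [Finset.mul_sum]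
    _ ≤ (1 + ε) ^ 2 * ∑ j : M, a (σ j) j := by
        apply mul_le_mul_of_nonneg_left _ hpos.le
        have hdisj : ((Finset.univ : Finset N) : Set N).PairwiseDisjoint T := by
          intro i _ i' _ hne
          exact hT i i' hne
        rw [← Finset.sum_biUnion hdisj]
        exact Finset.sum_le_sum_of_subset_of_nonneg (Finset.subset_univ _)
          (fun j _ _ => ha _ _)
    _ ≤ (∑ i : N, vt i (R i)) * (1 + ε) ^ 2 := by
        rw [mul_comm]
        exact mul_le_mul_of_nonneg_right hRsum hpos.le
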